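/- Let d ≥ 2, r > 0, and h : (0, r] → ℝ≥0 increasing. If the Riemann–Stieltjes integral ∫₀^r k_{d-2}(t) dh(t) converges (is finite), then the limit h(0) := lim_{t→0⁺} h(t) exists in ℝ≥0 and lim_{t→0⁺} (h(t) − h(0))·k_{d-2}(t) = 0. -/

import Mathlib

open MeasureTheory Set Filter
open scoped ENNReal NNReal

/-- The kernel `k_{d-2}`: `log t` when `d = 2` and `-1/t^(d-2)` when `d > 2`. -/
noncomputable def kk (d : ℕ) (t : ℝ) : ℝ := if d = 2 then Real.log t else -1 / t ^ (d - 2)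

lemma kk_measurable (d : ℕ) : Measurable (kk d) := by
  unfold kk
  split_ifs
  · exact Real.measurable_log
  · exact measurable_const.div (measurable_id.pow_const _)

lemma kk_anti (d : ℕ) {s t : ℝ} (hs : 0 < s) (hst : s ≤ t) (ht1 : t ≤ 1) :
    ‖kk d t‖₊ ≤ ‖kk d s‖₊ := by
  have ht : 0 < t := lt_of_lt_of_le hs hst
  rw [← NNReal.coe_le_coe]
  simp only [coe_nnnorm, Real.norm_eq_abs]
  unfold kk
  split_ifs
  · rw [abs_of_nonpos (Real.log_nonpos ht.le ht1),
      abs_of_nonpos (Real.log_nonpos hs.le (hst.trans ht1))]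
    exact neg_le_neg (Real.log_le_log hs hst)
  · rw [abs_div, abs_div]
    simp only [abs_neg, abs_one]
    rw [abs_of_nonneg (by positivity), abs_of_nonneg (by positivity)]
    exact div_le_div_of_nonneg_left one_pos.le (by positivity) (pow_le_pow_left₀ hs.le hst _)

lemma iInter_Ioc_gt_zero : ⋂ t > (0:ℝ), Ioc 0 t = ∅ := by
  ext x
  simp only [mem_iInter, mem_Ioc, mem_empty_iff_false, iff_false, not_forall]
  by_cases hx : 0 < x
  · exact ⟨x / 2, half_pos hx, fun ⟨_, hle⟩ => by linarith⟩
  · exact ⟨1, one_pos, fun ⟨h0, _⟩ => hx h0⟩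

/-- If `h` is a nonnegative increasing (Stieltjes) function on `(0, r]` and the Stieltjes
integral `∫₀^r k_{d-2}(t) dh(t)` converges, then `h(0) := lim_{t→0⁺} h(t)` exists (in `ℝ≥0`)
and `lim_{t→0⁺} (h(t) - h(0)) · k_{d-2}(t) = 0`. -/
theorem stmt3 (d : ℕ) (hd : 2 ≤ d) (r : ℝ) (hr : 0 < r) (h : StieltjesFunction ℝ)
    (hpos : ∀ t ∈ Set.Ioc (0 : ℝ) r, 0 ≤ h t)
    (hint : MeasureTheory.IntegrableOn (kk d) (Set.Ioc (0 : ℝ) r) h.measure) :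
    ∃ L : ℝ, 0 ≤ L ∧ Filter.Tendsto (⇑h) (nhdsWithin 0 (Set.Ioi 0)) (nhds L) ∧
      Filter.Tendsto (fun t => (h t - L) * kk d t) (nhdsWithin 0 (Set.Ioi 0)) (nhds 0) := by
  set μ := h.measure with hμ
  -- the limit is h 0 by right-continuity
  have htend : Tendsto (⇑h) (nhdsWithin 0 (Set.Ioi 0)) (nhds (h 0)) :=
    ((h.right_continuous 0).tendsto).mono_left (nhdsWithin_mono 0 Ioi_subset_Ici_self)
  have hev : ∀ᶠ t in nhdsWithin (0:ℝ) (Set.Ioi 0), t ∈ Set.Ioc (0:ℝ) r :=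
    Ioc_mem_nhdsGT_of_mem ⟨le_refl 0, hr⟩
  have hL0 : 0 ≤ h 0 :=
    ge_of_tendsto htend (hev.mono fun t ht => hpos t ht)
  refine ⟨h 0, hL0, htend, ?_⟩
  -- the weighted measure ν
  set ν := μ.withDensity (fun s => (‖kk d s‖₊ : ℝ≥0∞)) with hν
  have hνapp : ∀ t : ℝ, ν (Ioc 0 t) = ∫⁻ s in Ioc 0 t, (‖kk d s‖₊ : ℝ≥0∞) ∂μ := fun t =>
    withDensity_apply _ measurableSet_Ioc
  have hνr : ν (Ioc 0 r) ≠ ∞ := by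
    rw [hνapp]
    exact hint.2.ne
  -- ν (Ioc 0 t) → 0 as t → 0⁺
  have hν0 : Tendsto (fun t => ν (Ioc 0 t)) (nhdsWithin (0:ℝ) (Set.Ioi 0)) (nhds 0) := by
    have := tendsto_measure_biInter_gt (μ := ν) (s := fun t : ℝ => Ioc 0 t) (a := 0)
      (fun t _ => measurableSet_Ioc.nullMeasurableSet)
      (fun i j _ hij => Ioc_subset_Ioc_right hij)
      ⟨r, hr, hνr⟩
    rwa [iInter_Ioc_gt_zero, measure_empty] at this
  -- key pointwise bound
  have hbound : ∀ᶠ t in nhdsWithin (0:ℝ) (Set.Ioi 0),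
      ‖(h t - h 0) * kk d t‖ ≤ (ν (Ioc 0 t)).toReal := by
    have hev1 : ∀ᶠ t in nhdsWithin (0:ℝ) (Set.Ioi 0), t ∈ Set.Ioc (0:ℝ) (min r 1) :=
      Ioc_mem_nhdsGT_of_mem ⟨le_refl 0, lt_min hr one_pos⟩
    filter_upwards [hev1] with t ht
    obtain ⟨ht0, htr1⟩ := ht
    have ht1 : t ≤ 1 := htr1.trans (min_le_right _ _)
    have htr : t ≤ r := htr1.trans (min_le_left _ _)
    have hμIoc : μ (Ioc 0 t) = ENNReal.ofReal (h t - h 0) := h.measure_Ioc 0 t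
    have hmono : h 0 ≤ h t := h.mono ht0.le
    -- the LHS as a toReal of an ENNReal product
    have key : (μ (Ioc 0 t)) * (‖kk d t‖₊ : ℝ≥0∞) ≤ ν (Ioc 0 t) := by
      rw [hνapp]
      calc (μ (Ioc 0 t)) * (‖kk d t‖₊ : ℝ≥0∞)
          = ∫⁻ _ in Ioc 0 t, (‖kk d t‖₊ : ℝ≥0∞) ∂μ := by
            rw [setLIntegral_const, mul_comm]
        _ ≤ ∫⁻ s in Ioc 0 t, (‖kk d s‖₊ : ℝ≥0∞) ∂μ := by
            refine setLIntegral_mono ((kk_measurable d).nnnorm.coe_nnreal_ennreal) ?_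
            intro s hs
            exact_mod_cast kk_anti d hs.1 hs.2 ht1
    have hfin : ν (Ioc 0 t) ≠ ∞ :=
      fun htop => hνr (top_le_iff.mp (htop ▸ measure_mono (Ioc_subset_Ioc_right htr)))
    have := ENNReal.toReal_mono hfin key
    rw [ENNReal.toReal_mul, hμIoc, ENNReal.toReal_ofReal (by linarith),
      ENNReal.coe_toReal, coe_nnnorm] at this
    calc ‖(h t - h 0) * kk d t‖ = (h t - h 0) * ‖kk d t‖ := by
          rw [norm_mul, Real.norm_of_nonneg (by linarith)]
      _ ≤ (ν (Ioc 0 t)).toReal := this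
  -- conclude by squeezing
  have htoReal : Tendsto (fun t => (ν (Ioc 0 t)).toReal) (nhdsWithin (0:ℝ) (Set.Ioi 0))
      (nhds 0) := by
    have : Tendsto ENNReal.toReal (nhds (0:ℝ≥0∞)) (nhds (0:ℝ≥0∞).toReal) :=
      (ENNReal.tendsto_toReal (by simp))
    simpa [Function.comp_def] using this.comp hν0
  exact squeeze_zero_norm' hbound htoReal
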